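/- Let F = rG be the disjoint union of r copies of a connected graph G. If G is rigid (its only automorphism is the identity), then Fix(F) = r − 1; otherwise Fix(F) = r · Fix(G). -/

import Mathlib

open SimpleGraph

/-- `φ` is a distinguishing labeling of `G`: the only automorphism preserving `φ` is the identity. -/
def IsDist {V α : Type*} (G : SimpleGraph V) (φ : V → α) : Prop :=
  ∀ π : G ≃g G, (∀ v, φ (π v) = φ v) → ∀ v, π v = v

/-- The distinguishing number `D(G)`. -/
noncomputable def distNum {V : Type*} (G : SimpleGraph V) : ℕ :=
  sInf {c : ℕ | ∃ φ : V → Fin c, IsDist G φ}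

/-- `S` is a fixing set of `G`. -/
def IsFixingSet {V : Type*} (G : SimpleGraph V) (S : Set V) : Prop :=
  ∀ π : G ≃g G, (∀ v ∈ S, π v = v) → ∀ v, π v = v

/-- The fixing number `Fix(G)`. -/
noncomputable def fixNum {V : Type*} (G : SimpleGraph V) : ℕ :=
  sInf {n : ℕ | ∃ S : Set V, S.ncard = n ∧ IsFixingSet G S}

/-- `D(G, c)`: the number of pairwise inequivalent distinguishing labelings of `G`
using at most `c` colors. -/
noncomputable def countDist {V : Type*} (G : SimpleGraph V) (c : ℕ) : ℕ :=
  Nat.card (Quot (fun φ ψ : {φ : V → Fin c // IsDist G φ} =>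
    ∃ π : G ≃g G, ∀ v, φ.1 v = ψ.1 (π v)))

/-- The disjoint union of `r` copies of `G`. -/
def copies {V : Type*} (r : ℕ) (G : SimpleGraph V) : SimpleGraph (Fin r × V) where
  Adj x y := x.1 = y.1 ∧ G.Adj x.2 y.2
  symm := by
    constructor
    rintro ⟨i, u⟩ ⟨j, v⟩ ⟨h1, h2⟩
    exact ⟨h1.symm, h2.symm⟩
  loopless := by
    constructor
    rintro ⟨i, u⟩ ⟨-, h⟩
    exact G.loopless.irrefl u h

section Aux

variable {V : Type*} {r : ℕ} (G : SimpleGraph V)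

lemma copies_adj {x y : Fin r × V} :
    (copies r G).Adj x y ↔ x.1 = y.1 ∧ G.Adj x.2 y.2 := Iff.rfl

/-- Build an automorphism of `copies r G` from a permutation of components and
automorphisms in each component. -/
def mkCopies (σ : Equiv.Perm (Fin r)) (e : Fin r → (G ≃g G)) :
    copies r G ≃g copies r G where
  toFun x := (σ x.1, e x.1 x.2)
  invFun x := (σ.symm x.1, (e (σ.symm x.1)).symm x.2)
  left_inv := by rintro ⟨i, v⟩; simp
  right_inv := by rintro ⟨i, v⟩; simp
  map_rel_iff' := by
    rintro ⟨i, u⟩ ⟨j, v⟩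
    simp only [Equiv.coe_fn_mk, copies_adj]
    constructor
    · rintro ⟨h1, h2⟩
      have hij : i = j := σ.injective h1
      subst hij
      exact ⟨rfl, (e i).map_rel_iff.mp h2⟩
    · rintro ⟨h1, h2⟩
      cases h1
      exact ⟨rfl, (e i).map_rel_iff.mpr h2⟩

@[simp] lemma mkCopies_apply (σ : Equiv.Perm (Fin r)) (e : Fin r → (G ≃g G)) (i : Fin r) (v : V) :
    mkCopies G σ e (i, v) = (σ i, e i v) := rfl

lemma fst_aux (hG : G.Connected) (π : copies r G ≃g copies r G) (i : Fin r)
    (v w : V) : (π (i, v)).1 = (π (i, w)).1 := by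
  obtain ⟨p⟩ := hG.preconnected v w
  induction p with
  | nil => rfl
  | @cons a b c h p ih =>
      have hadj : (copies r G).Adj (i, a) (i, b) := ⟨rfl, h⟩
      have h2 : (copies r G).Adj (π (i, a)) (π (i, b)) := π.map_rel_iff.mpr hadj
      exact h2.1.trans ih

/-- Every automorphism of `copies r G` (for `G` connected) decomposes as a permutation
of the components together with an automorphism of `G` in each component. -/
lemma decomp (hG : G.Connected) (π : copies r G ≃g copies r G) :
    ∃ σ : Equiv.Perm (Fin r), ∃ e : Fin r → (G ≃g G),
      ∀ i v, π (i, v) = (σ i, e i v) := by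
  obtain ⟨v₀⟩ := hG.nonempty
  have key : ∀ (ρ : copies r G ≃g copies r G) (i : Fin r) (w : V),
      (ρ.symm ((ρ (i, v₀)).1, w)).1 = i := by
    intro ρ i w
    have h1 := fst_aux G hG ρ.symm ((ρ (i, v₀)).1) w ((ρ (i, v₀)).2)
    rw [h1]
    have h2 : (((ρ (i, v₀)).1, (ρ (i, v₀)).2) : Fin r × V) = ρ (i, v₀) := rfl
    rw [h2, RelIso.symm_apply_apply]
  refine ⟨⟨fun i => (π (i, v₀)).1, fun j => (π.symm (j, v₀)).1, ?_, ?_⟩,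
    fun i => ⟨⟨fun v => (π (i, v)).2, fun w => (π.symm ((π (i, v₀)).1, w)).2, ?_, ?_⟩, ?_⟩, ?_⟩
  · intro i
    exact key π i v₀
  · intro j
    exact key π.symm j v₀
  · intro v
    have h := fst_aux G hG π i v₀ v
    show (π.symm ((π (i, v₀)).1, (π (i, v)).2)).2 = v
    rw [h]
    have h2 : (((π (i, v)).1, (π (i, v)).2) : Fin r × V) = π (i, v) := rfl
    rw [h2, RelIso.symm_apply_apply]
  · intro w
    have hk := key π i w
    show (π (i, (π.symm ((π (i, v₀)).1, w)).2)).2 = w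
    have h2 : ((i, (π.symm ((π (i, v₀)).1, w)).2) : Fin r × V)
        = π.symm ((π (i, v₀)).1, w) := Prod.ext hk.symm rfl
    rw [h2, RelIso.apply_symm_apply]
  · intro u v
    simp only [Equiv.coe_fn_mk]
    constructor
    · intro h
      have hadj : (copies r G).Adj (π (i, u)) (π (i, v)) := ⟨fst_aux G hG π i u v, h⟩
      exact (π.map_rel_iff.mp hadj).2
    · intro h
      exact (π.map_rel_iff.mpr (⟨rfl, h⟩ : (copies r G).Adj (i, u) (i, v))).2
  · intro i v
    exact Prod.ext (fst_aux G hG π i v v₀) rfl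

lemma isFixingSet_univ : IsFixingSet G (Set.univ) :=
  fun π h v => h v trivial

lemma fixSetNonempty [Fintype V] :
    {n : ℕ | ∃ S : Set V, S.ncard = n ∧ IsFixingSet G S}.Nonempty :=
  ⟨(Set.univ : Set V).ncard, Set.univ, rfl, isFixingSet_univ G⟩

end Aux

/-- For `F = rG` the disjoint union of `r` copies of a connected graph `G`:
if `G` is rigid then `Fix(F) = r - 1`, and otherwise `Fix(F) = r * Fix(G)`. -/
theorem fix_copies {V : Type*} [Fintype V] (G : SimpleGraph V) (hG : G.Connected)
    (r : ℕ) (hr : 1 ≤ r) :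
    ((∀ π : G ≃g G, ∀ v, π v = v) → fixNum (copies r G) = r - 1) ∧
    (¬ (∀ π : G ≃g G, ∀ v, π v = v) → fixNum (copies r G) = r * fixNum G) := by
  classical
  obtain ⟨v₀⟩ := hG.nonempty
  have hne := fixSetNonempty (copies r G)
  constructor
  · -- rigid case
    intro hrig
    set i₀ : Fin r := ⟨0, hr⟩ with hi₀
    apply le_antisymm
    · -- upper bound: the set {(i, v₀) | i ≠ i₀} is fixing
      apply Nat.sInf_le
      refine ⟨(fun i => (i, v₀)) '' {i₀}ᶜ, ?_, ?_⟩
      · have hinj : Function.Injective (fun i : Fin r => ((i, v₀) : Fin r × V)) :=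
          fun a b h => congrArg Prod.fst h
        rw [Set.ncard_image_of_injective _ hinj]
        have := Set.ncard_add_ncard_compl ({i₀} : Set (Fin r))
        simp only [Set.ncard_singleton, Nat.card_eq_fintype_card, Fintype.card_fin] at this
        omega
      · intro π h
        obtain ⟨σ, e, hπ⟩ := decomp G hG π
        have hefix : ∀ i v, e i v = v := fun i => hrig (e i)
        have hσ : ∀ i, i ≠ i₀ → σ i = i := by
          intro i hi
          have := h (i, v₀) ⟨i, hi, rfl⟩
          rw [hπ] at this
          exact (Prod.ext_iff.mp this).1
        have hσ0 : σ i₀ = i₀ := by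
          by_contra hc
          have : σ (σ i₀) = σ i₀ := hσ _ hc
          exact hc (σ.injective this)
        have hσall : ∀ i, σ i = i := by
          intro i
          by_cases hi : i = i₀
          · rw [hi]; exact hσ0
          · exact hσ i hi
        rintro ⟨i, v⟩
        rw [hπ, hσall, hefix]
    · -- lower bound
      apply le_csInf hne
      rintro n ⟨S, hcard, hfix⟩
      have hsub : ((Prod.fst '' S)ᶜ : Set (Fin r)).Subsingleton := by
        intro i hi j hj
        by_contra hij
        have hfixed : ∀ p ∈ S, (mkCopies G (Equiv.swap i j) (fun _ => RelIso.refl _)) p = p := by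
          rintro ⟨k, v⟩ hp
          have hki : k ≠ i := fun h => hi ⟨(k, v), hp, h⟩
          have hkj : k ≠ j := fun h => hj ⟨(k, v), hp, h⟩
          show ((Equiv.swap i j k, _) : Fin r × V) = _
          rw [Equiv.swap_apply_of_ne_of_ne hki hkj]
          rfl
        have := hfix _ hfixed (i, v₀)
        rw [mkCopies_apply, Equiv.swap_apply_left] at this
        exact hij (Prod.ext_iff.mp this).1.symm
      have h1 : ((Prod.fst '' S)ᶜ : Set (Fin r)).ncard ≤ 1 := by
        rcases hsub.eq_empty_or_singleton with h | ⟨a, h⟩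
        · rw [h]; simp
        · rw [h]; simp
      have h2 := Set.ncard_add_ncard_compl (Prod.fst '' S)
      simp only [Nat.card_eq_fintype_card, Fintype.card_fin] at h2
      have h3 : (Prod.fst '' S).ncard ≤ S.ncard := Set.ncard_image_le S.toFinite
      omega
  · -- non-rigid case
    intro hnrig
    have hGne := fixSetNonempty G
    obtain ⟨S₀, hS₀card, hS₀fix⟩ := Nat.sInf_mem hGne
    rw [show sInf {n | ∃ S : Set V, S.ncard = n ∧ IsFixingSet G S} = fixNum G from rfl] at hS₀card
    have hS₀ne : S₀.Nonempty := by
      rcases S₀.eq_empty_or_nonempty with h | h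
      · exfalso
        apply hnrig
        intro π v
        apply hS₀fix π
        intro u hu
        rw [h] at hu
        exact absurd hu (Set.notMem_empty u)
      · exact h
    obtain ⟨s₀, hs₀⟩ := hS₀ne
    apply le_antisymm
    · -- upper bound: put a copy of S₀ in each component
      apply Nat.sInf_le
      refine ⟨(Set.univ : Set (Fin r)) ×ˢ S₀, ?_, ?_⟩
      · rw [← Nat.card_coe_set_eq, Nat.card_congr (Equiv.Set.prod _ _), Nat.card_prod,
          Nat.card_coe_set_eq, Nat.card_coe_set_eq, Set.ncard_univ, Nat.card_eq_fintype_card,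
          Fintype.card_fin, hS₀card]
      · intro π h
        obtain ⟨σ, e, hπ⟩ := decomp G hG π
        have hσ : ∀ i, σ i = i := by
          intro i
          have := h (i, s₀) ⟨trivial, hs₀⟩
          rw [hπ] at this
          exact (Prod.ext_iff.mp this).1
        have he : ∀ i v, e i v = v := by
          intro i
          apply hS₀fix (e i)
          intro v hv
          have := h (i, v) ⟨trivial, hv⟩
          rw [hπ] at this
          exact (Prod.ext_iff.mp this).2
        rintro ⟨i, v⟩
        rw [hπ, hσ, he]
    · -- lower bound
      apply le_csInf hne
      rintro n ⟨S, hcard, hfix⟩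
      -- each slice is a fixing set of G
      have hslice : ∀ i : Fin r, IsFixingSet G {v | (i, v) ∈ S} := by
        intro i τ hτ
        set π := mkCopies G (Equiv.refl _) (fun j => if j = i then τ else RelIso.refl _) with hπdef
        have hfixed : ∀ p ∈ S, π p = p := by
          rintro ⟨k, v⟩ hp
          simp only [hπdef, mkCopies_apply, Equiv.refl_apply]
          by_cases hk : k = i
          · subst hk
            rw [if_pos rfl, hτ v hp]
          · rw [if_neg hk]
            rfl
        intro v
        have := hfix π hfixed (i, v)
        simp only [hπdef, mkCopies_apply, Equiv.refl_apply, if_pos rfl] at this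
        exact (Prod.ext_iff.mp this).2
      have hge : ∀ i : Fin r, fixNum G ≤ ({v | (i, v) ∈ S}).ncard :=
        fun i => Nat.sInf_le ⟨_, rfl, hslice i⟩
      -- S.ncard = ∑ i, slice i
      have hsum : S.ncard = ∑ i : Fin r, ({v | (i, v) ∈ S}).ncard := by
        have e : ↥S ≃ (Σ i : Fin r, ↥{v | (i, v) ∈ S}) :=
          { toFun := fun p => ⟨p.1.1, p.1.2, p.2⟩
            invFun := fun q => ⟨(q.1, q.2.1), q.2.2⟩
            left_inv := fun p => rfl
            right_inv := fun q => rfl }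
        rw [← Nat.card_coe_set_eq, Nat.card_congr e, Nat.card_eq_fintype_card,
          Fintype.card_sigma]
        congr 1
        ext i
        rw [← Nat.card_coe_set_eq, Nat.card_eq_fintype_card]
      rw [← hcard, hsum]
      calc r * fixNum G = (Finset.univ : Finset (Fin r)).card • fixNum G := by
            simp [Finset.card_univ]
        _ ≤ ∑ i : Fin r, ({v | (i, v) ∈ S}).ncard :=
            Finset.card_nsmul_le_sum _ _ _ (fun i _ => hge i)
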